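/- Let n ≥ 2. There exists a matrix C⁰ = (c⁰_{jk}) ∈ 𝒢_(n)(ℝ) such that: (i) D(C⁰) = det C⁰ = 0; (ii) c⁰_{jk} > 1 for all j ≠ k; (iii) (−1)^{|I|} D_I(C⁰) < 0 for every subset I ⊆ {0,…,n} with 2 ≤ |I| ≤ n; (iv) the mixed minor D_{{0,2,…,n},{1,2,…,n}}(C⁰) (rows {0,2,…,n}, columns {1,2,…,n}) is nonzero, so that the differential of the determinant at C⁰ is nonzero and C⁰ is a regular point of the hypersurface {det = 0}. Moreover, C⁰ lies in the boundary of the set 𝒞_{Λ^n} = {C ∈ 𝒢_(n)(ℝ) : c_{jk} > 1 for all j ≠ k and (−1)^{|I|} D_I(C) < 0 for all I with 2 ≤ |I| ≤ n+1}. (Such C⁰ is obtained as the Gram matrix, with respect to the Minkowski form, of n+1 points on the upper hyperboloid lying in a common hyperplane so that every n of them are linearly independent.) -/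

import Mathlib

/-- The principal minor `D_I(C)` of a matrix `C` on the rows and columns with
indices in the subset `I ⊆ {0, …, n}`. -/
noncomputable def principalMinor (n : ℕ) (I : Finset (Fin (n + 1)))
    (C : Matrix (Fin (n + 1)) (Fin (n + 1)) ℝ) : ℝ :=
  (C.submatrix (fun i : I => (i : Fin (n + 1))) (fun i : I => (i : Fin (n + 1)))).det

/-- The mixed minor `D_{{0,2,…,n},{1,2,…,n}}(C)`: rows `{0,2,…,n}`, columns
`{1,2,…,n}` (each taken in increasing order). -/
noncomputable def mixedMinor (n : ℕ) (C : Matrix (Fin (n + 1)) (Fin (n + 1)) ℝ) : ℝ :=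
  (C.submatrix
    (fun i : Fin n => if i.val = 0 then (0 : Fin (n + 1)) else i.succ)
    (fun i : Fin n => (i : Fin n).succ)).det

/-- The set `𝒞_{Λ^n}` of Gram matrices of vertices of non-degenerate bounded
simplices in the Lobachevsky space `Λ^n`: real symmetric matrices with unit
diagonal, `c_{jk} > 1` off the diagonal and `(-1)^{|I|} D_I(C) < 0` for every
`I` with `|I| ≥ 2`. -/
def lobachevskyGram (n : ℕ) : Set (Matrix (Fin (n + 1)) (Fin (n + 1)) ℝ) :=
  {C | C.IsSymm ∧ (∀ j, C j j = 1) ∧ (∀ j k, j ≠ k → 1 < C j k) ∧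
    ∀ I : Finset (Fin (n + 1)), 2 ≤ I.card →
      (-1 : ℝ) ^ I.card * principalMinor n I C < 0}

namespace BPHG
noncomputable section
open Matrix

/-- Minkowski form matrix on `Fin D`, time index `0`. -/
def mink (D : ℕ) : Matrix (Fin D) (Fin D) ℝ :=
  Matrix.diagonal fun c => if (c : ℕ) = 0 then 1 else -1

/-- The Minkowski quadratic/bilinear form. -/
def qf (D : ℕ) (a b : Fin D → ℝ) : ℝ :=
  ∑ c : Fin D, (if (c : ℕ) = 0 then (1:ℝ) else -1) * a c * b c

lemma mink_transpose (D : ℕ) : (mink D)ᵀ = mink D := Matrix.diagonal_transpose _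

lemma gram_transpose {N D : ℕ} (V : Matrix (Fin N) (Fin D) ℝ) :
    (V * mink D * Vᵀ)ᵀ = V * mink D * Vᵀ := by
  rw [Matrix.transpose_mul, Matrix.transpose_mul, Matrix.transpose_transpose, mink_transpose,
    Matrix.mul_assoc]

lemma gram_apply {N D : ℕ} (V : Matrix (Fin N) (Fin D) ℝ) (j k : Fin N) :
    (V * mink D * Vᵀ) j k = ∑ c : Fin D, (if (c : ℕ) = 0 then (1:ℝ) else -1) * V j c * V k c := by
  rw [Matrix.mul_assoc]
  simp only [mink, Matrix.mul_apply, Matrix.diagonal_apply, Matrix.transpose_apply, ite_mul,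
    zero_mul, Finset.sum_ite_eq, Finset.mem_univ, if_true]
  refine Finset.sum_congr rfl fun c _ => by split_ifs <;> ring

lemma dot_gram {N D : ℕ} (V : Matrix (Fin N) (Fin D) ℝ) (y y' : Fin N → ℝ) :
    y ᵥ* (V * mink D * Vᵀ) ⬝ᵥ y' = qf D (y ᵥ* V) (y' ᵥ* V) := by
  rw [← Matrix.vecMul_vecMul, ← Matrix.vecMul_vecMul, Matrix.vecMul_transpose]
  rw [dotProduct_comm, Matrix.dotProduct_mulVec]
  simp only [qf, dotProduct, mink, Matrix.vecMul_diagonal]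
  refine Finset.sum_congr rfl fun c _ => by ring

lemma qf_succ {d : ℕ} (a b : Fin (d+1) → ℝ) :
    qf (d+1) a b = a 0 * b 0 - ∑ i : Fin d, a i.succ * b i.succ := by
  rw [qf, Fin.sum_univ_succ]
  simp only [Fin.val_zero, if_pos rfl, Fin.val_succ, Nat.succ_ne_zero, if_false,
    Nat.add_eq_zero, and_false, if_true, eq_self_iff_true]
  rw [sub_eq_add_neg, ← Finset.sum_neg_distrib]
  congr 1
  · ring
  · refine Finset.sum_congr rfl fun c _ => by ring

lemma timelike_neg {d : ℕ} (w z : Fin (d+1) → ℝ) (hw : qf (d+1) w w = 1)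
    (ho : qf (d+1) w z = 0) (hz : z ≠ 0) : qf (d+1) z z < 0 := by
  rw [qf_succ] at hw ho ⊢
  set W' := ∑ i : Fin d, w i.succ * w i.succ with hW'
  set Z' := ∑ i : Fin d, z i.succ * z i.succ with hZ'
  have hW0 : 0 ≤ W' := Finset.sum_nonneg fun i _ => mul_self_nonneg _
  have hZ0 : 0 ≤ Z' := Finset.sum_nonneg fun i _ => mul_self_nonneg _
  have hCS : (∑ i : Fin d, w i.succ * z i.succ)^2 ≤ W' * Z' := by
    have := Finset.sum_mul_sq_le_sq_mul_sq Finset.univ (fun i : Fin d => w i.succ)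
      (fun i : Fin d => z i.succ)
    simpa [hW', hZ', sq] using this
  have hP : ∑ i : Fin d, w i.succ * z i.succ = w 0 * z 0 := by linarith
  -- show z 0 ^ 2 < Z'
  have key : z 0 * z 0 < Z' := by
    by_contra hle
    push_neg at hle
    have h1 : (w 0 * z 0)^2 ≤ W' * Z' := by rw [← hP]; exact hCS
    have hw0 : w 0 * w 0 = 1 + W' := by linarith
    have hz0 : z 0 = 0 := by nlinarith
    have hZz : Z' = 0 := by nlinarith
    apply hz
    have h2 : ∀ i ∈ (Finset.univ : Finset (Fin d)), z i.succ * z i.succ = 0 :=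
      (Finset.sum_eq_zero_iff_of_nonneg (fun i _ => mul_self_nonneg (z i.succ))).mp (hZ' ▸ hZz)
    funext i
    refine Fin.cases hz0 (fun i => ?_) i
    have h3 := h2 i (Finset.mem_univ i)
    simp only [Pi.zero_apply]
    nlinarith [h3]
  nlinarith


lemma gram_det_sign {d m : ℕ} (hm : 1 ≤ m) (W : Matrix (Fin m) (Fin (d+1)) ℝ)
    (hnorm : ∀ j, (W * mink (d+1) * Wᵀ) j j = 1)
    (hind : ∀ x : Fin m → ℝ, x ᵥ* W = 0 → x = 0) :
    0 < (-1 : ℝ)^(m-1) * (W * mink (d+1) * Wᵀ).det := by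
  obtain ⟨m, rfl⟩ : ∃ k, m = k + 1 := ⟨m-1, by omega⟩
  set A := W * mink (d+1) * Wᵀ with hA
  have hAs : ∀ j k, A k j = A j k := fun j k =>
    congrFun (congrFun (gram_transpose W) j) k
  have hA00 : A 0 0 = 1 := hnorm 0
  set F : Matrix (Fin (m+1)) (Fin (m+1)) ℝ :=
    Matrix.of (fun j k => if k = 0 then (if j = 0 then 0 else -(A j 0)) else 0) with hF
  set E : Matrix (Fin (m+1)) (Fin (m+1)) ℝ := 1 + F with hE
  have hdetE : E.det = 1 := by
    rw [Matrix.det_of_lowerTriangular]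
    · have : ∀ i : Fin (m+1), E i i = 1 := by
        intro i
        by_cases hi : i = 0 <;> simp [hE, hF, Matrix.one_apply, hi]
      rw [Finset.prod_congr rfl fun i _ => this i]
      simp
    · intro i j hij
      have h2 : i < j := hij
      have h1 : i ≠ j := ne_of_lt h2
      have h0 : j ≠ 0 := by
        intro h
        rw [h] at h2
        exact absurd h2 (by simp [h])
      simp [hE, hF, Matrix.one_apply, h1, h0]
  have hFM : ∀ (M : Matrix (Fin (m+1)) (Fin (m+1)) ℝ) (j l : Fin (m+1)),
      (F * M) j l = (if j = 0 then 0 else -(A j 0)) * M 0 l := by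
    intro M j l
    simp [hF, Matrix.mul_apply, ite_mul, zero_mul, Finset.sum_ite_eq']
  have hMF : ∀ (M : Matrix (Fin (m+1)) (Fin (m+1)) ℝ) (j k : Fin (m+1)),
      (M * Fᵀ) j k = M j 0 * (if k = 0 then 0 else -(A k 0)) := by
    intro M j k
    simp [hF, Matrix.mul_apply, Matrix.transpose_apply, mul_ite, mul_zero, Finset.sum_ite_eq']
  set A' := E * A * Eᵀ with hA'
  have hA'exp : A' = (A + F * A) + (A + F * A) * Fᵀ := by
    rw [hA', hE, Matrix.transpose_add, Matrix.transpose_one, Matrix.add_mul, Matrix.one_mul,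
      Matrix.mul_add, Matrix.mul_one]
  have hcol : ∀ j, A' j 0 = if j = 0 then 1 else 0 := by
    intro j
    rw [hA'exp]
    simp only [Matrix.add_apply, hMF, hFM]
    rcases eq_or_ne j 0 with rfl | hj
    · simp [hA00]
    · simp [hj, hA00]
  have hrow : ∀ k, k ≠ 0 → A' 0 k = 0 := by
    intro k hk
    rw [hA'exp]
    simp only [Matrix.add_apply, hMF, hFM]
    simp [hk, hAs 0 k, hA00]
  have hA'gram : A' = (E * W) * mink (d+1) * (E * W)ᵀ := by
    rw [hA', hA, Matrix.transpose_mul]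
    simp only [Matrix.mul_assoc]
  have hdetAA' : A'.det = A.det := by
    rw [hA', Matrix.det_mul, Matrix.det_mul, hdetE, Matrix.det_transpose, hdetE]
    ring
  set N := A'.submatrix Fin.succ Fin.succ with hN
  have hdetA'N : A'.det = N.det := by
    rw [Matrix.det_succ_column_zero, Finset.sum_eq_single 0]
    · rw [hcol 0]
      simp [Fin.succAbove_zero, hN]
    · intro i _ hi
      rw [hcol i]
      simp [hi]
    · intro h
      exact absurd (Finset.mem_univ _) h
  have hNneg : ∀ x : Fin m → ℝ, x ≠ 0 → x ⬝ᵥ N *ᵥ x < 0 := by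
    intro x hx
    set y : Fin (m+1) → ℝ := Fin.cons 0 x with hy
    have hyA : y ᵥ* A' ⬝ᵥ y = x ⬝ᵥ N *ᵥ x := by
      simp only [dotProduct, Matrix.vecMul, Matrix.mulVec, hN, Matrix.submatrix_apply,
        Fin.sum_univ_succ, hy, Fin.cons_zero, Fin.cons_succ, zero_mul, mul_zero, zero_add,
        add_zero, dotProduct]
      simp only [Finset.sum_mul, Finset.mul_sum]
      rw [Finset.sum_comm]
      exact Finset.sum_congr rfl fun j _ => Finset.sum_congr rfl fun k _ => by ring
    set p : Fin (m+1) → ℝ := Pi.single 0 1 with hp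
    have hpA' : ∀ (b : Fin (m+1) → ℝ), p ᵥ* A' ⬝ᵥ b = ∑ k, A' 0 k * b k := by
      intro b
      simp only [dotProduct, Matrix.vecMul, hp, Pi.single_apply, ite_mul, one_mul,
        zero_mul, Finset.sum_ite_eq', Finset.mem_univ, if_true]
    have hw1 : qf (d+1) (p ᵥ* (E * W)) (p ᵥ* (E * W)) = 1 := by
      rw [← dot_gram, ← hA'gram, hpA']
      rw [Fin.sum_univ_succ, hcol 0]
      simp only [if_pos rfl, one_mul, hp, Pi.single_apply]
      rw [Finset.sum_eq_zero fun k _ => by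
        rw [hrow k.succ (Fin.succ_ne_zero k)]; ring]
      simp
    have ho1 : qf (d+1) (p ᵥ* (E * W)) (y ᵥ* (E * W)) = 0 := by
      rw [← dot_gram, ← hA'gram, hpA']
      rw [Fin.sum_univ_succ]
      simp only [hy, Fin.cons_zero, Fin.cons_succ, mul_zero, zero_add]
      exact Finset.sum_eq_zero fun k _ => by
        rw [hrow k.succ (Fin.succ_ne_zero k)]; ring
    have hzne : y ᵥ* (E * W) ≠ 0 := by
      intro h0
      rw [← Matrix.vecMul_vecMul] at h0
      have h1 : y ᵥ* E = 0 := hind _ h0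
      have hu : IsUnit E.det := by rw [hdetE]; exact isUnit_one
      have h2 : y = 0 := by
        have := congrArg (fun v => v ᵥ* E⁻¹) h1
        simpa [Matrix.vecMul_vecMul, Matrix.mul_nonsing_inv E hu] using this
      obtain ⟨i, hi⟩ := Function.ne_iff.mp hx
      apply hi
      have := congrFun h2 i.succ
      simpa [hy] using this
    have hneg := timelike_neg _ _ hw1 ho1 hzne
    rw [← hyA, hA'gram, dot_gram]
    exact hneg
  have hNposdef : (-N).PosDef := by
    refine Matrix.PosDef.of_dotProduct_mulVec_pos ?_ ?_
    · have hA's : A'ᵀ = A' := by rw [hA'gram]; exact gram_transpose _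
      show (-N)ᴴ = -N
      ext i j
      have h2 := congrFun (congrFun hA's i.succ) j.succ
      simp only [Matrix.conjTranspose_apply, Matrix.neg_apply, hN, Matrix.submatrix_apply,
        star_trivial, Matrix.transpose_apply] at h2 ⊢
      rw [h2]
    · intro x hx
      have hsx : star x = x := by
        funext i
        simp
      rw [hsx, Matrix.neg_mulVec, dotProduct_neg]
      have := hNneg x hx
      linarith
  have hdetNpos := hNposdef.det_pos
  rw [Matrix.det_neg, Fintype.card_fin] at hdetNpos
  have hgoal : (-1 : ℝ)^(m+1-1) * A.det = (-1:ℝ)^m * N.det := by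
    rw [hdetAA'.symm, hdetA'N, Nat.add_sub_cancel]
  rw [hgoal]
  exact hdetNpos


lemma gram_apply' {N M D : ℕ} (V : Matrix (Fin N) (Fin D) ℝ) (U : Matrix (Fin M) (Fin D) ℝ)
    (j : Fin N) (k : Fin M) :
    (V * mink D * Uᵀ) j k = ∑ c : Fin D, (if (c : ℕ) = 0 then (1:ℝ) else -1) * V j c * U k c := by
  rw [Matrix.mul_assoc]
  simp only [mink, Matrix.mul_apply, Matrix.diagonal_apply, Matrix.transpose_apply, ite_mul,
    zero_mul, Finset.sum_ite_eq, Finset.mem_univ, if_true]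
  refine Finset.sum_congr rfl fun c _ => by split_ifs <;> ring

lemma gram_submatrix {N D k l : ℕ} (V : Matrix (Fin N) (Fin D) ℝ)
    (g : Fin k → Fin N) (h : Fin l → Fin N) :
    (V * mink D * Vᵀ).submatrix g h = (V.submatrix g id) * mink D * ((V.submatrix h id))ᵀ := by
  ext i j
  rw [Matrix.submatrix_apply, gram_apply', gram_apply']
  rfl

lemma principalMinor_eq' (n : ℕ) (I : Finset (Fin (n + 1)))
    (C : Matrix (Fin (n + 1)) (Fin (n + 1)) ℝ) :
    principalMinor n I C =
      (C.submatrix (fun i : Fin I.card => ((I.equivFin.symm i : Fin (n+1))))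
        (fun i : Fin I.card => ((I.equivFin.symm i : Fin (n+1))))).det := by
  rw [principalMinor]
  rw [← Matrix.det_submatrix_equiv_self I.equivFin.symm
    (C.submatrix (fun i : I => (i : Fin (n+1))) (fun i : I => (i : Fin (n+1))))]
  rw [Matrix.submatrix_submatrix]
  rfl

lemma extend_indep {Nn k D : ℕ} (V : Matrix (Fin Nn) (Fin D) ℝ) (g : Fin k → Fin Nn)
    (hg : Function.Injective g)
    (hind : ∀ y : Fin Nn → ℝ, y ᵥ* V = 0 → (∀ j, (∀ i, g i ≠ j) → y j = 0) → y = 0) :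
    ∀ x : Fin k → ℝ, x ᵥ* (V.submatrix g id) = 0 → x = 0 := by
  intro x hx
  set y : Fin Nn → ℝ := fun j => ∑ i, if g i = j then x i else 0 with hy
  have hyV : y ᵥ* V = 0 := by
    funext c
    have h1 : (y ᵥ* V) c = ∑ i, x i * V (g i) c := by
      simp only [Matrix.vecMul, dotProduct, hy, Finset.sum_mul, ite_mul, zero_mul]
      rw [Finset.sum_comm]
      refine Finset.sum_congr rfl fun i _ => ?_
      rw [Finset.sum_ite_eq]
      simp
    have h2 := congrFun hx c
    simp only [Matrix.vecMul, dotProduct, Matrix.submatrix_apply, id_eq,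
      Pi.zero_apply] at h2
    rw [h1]
    simpa using h2
  have hyz : y = 0 := hind y hyV (fun j hj => by
    rw [hy]
    exact Finset.sum_eq_zero fun i _ => if_neg (hj i))
  funext i
  have h3 : y (g i) = x i := by
    rw [hy]
    show (∑ i' : Fin k, if g i' = g i then x i' else 0) = x i
    rw [Finset.sum_congr rfl (fun i' _ =>
      show (if g i' = g i then x i' else 0) = if i' = i then x i' else 0 by
        rcases eq_or_ne i' i with rfl | h
        · simp
        · rw [if_neg (fun hh => h (hg hh)), if_neg h])]
    rw [Finset.sum_ite_eq']
    simp
  rw [← h3, hyz]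
  simp


/-! ### The concrete construction -/

def sE (m : ℕ) (ε : ℝ) : ℝ := Real.sqrt (1 + ((m:ℝ)+1)/4 + ε^2)

def Tf (m : ℕ) (ε : ℝ) (j : Fin (m+3)) : ℝ :=
  if (j:ℕ) = 0 then 1 else if (j:ℕ) = m+2 then sE m ε else Real.sqrt 2

def Sf (m : ℕ) (j : Fin (m+3)) (i : Fin (m+1)) : ℝ :=
  if (j:ℕ) = m+2 then 1/2 else if (j:ℕ) = (i:ℕ)+1 then 1 else 0

def Lf (m : ℕ) (ε : ℝ) (j : Fin (m+3)) : ℝ := if (j:ℕ) = m+2 then ε else 0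

def Wb (m : ℕ) (ε : ℝ) : Matrix (Fin (m+3)) (Fin (m+3)) ℝ :=
  Matrix.of fun j c =>
    if (c:ℕ) = 0 then Tf m ε j
    else if _h : (c:ℕ) = m+2 then Lf m ε j
    else Sf m j ⟨(c:ℕ) - 1, by have := c.isLt; omega⟩

/-- abbreviations for the three classes of indices in `Fin (m+3)` -/
def md (m : ℕ) (i : Fin (m+1)) : Fin (m+3) := (i.castSucc).succ
def lt3 (m : ℕ) : Fin (m+3) := (Fin.last (m+1)).succ

lemma md_val (m : ℕ) (i : Fin (m+1)) : ((md m i : Fin (m+3)) : ℕ) = (i:ℕ) + 1 := by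
  simp [md]

lemma lt3_val (m : ℕ) : ((lt3 m : Fin (m+3)) : ℕ) = m + 2 := by
  simp [lt3]

lemma fin3_cases (m : ℕ) (j : Fin (m+3)) :
    j = 0 ∨ (∃ i : Fin (m+1), j = md m i) ∨ j = lt3 m := by
  have hj := j.isLt
  rcases Nat.lt_or_ge (j:ℕ) 1 with h | h
  · exact Or.inl (Fin.ext (by simp only [Fin.val_zero]; omega))
  rcases Nat.lt_or_ge (j:ℕ) (m+2) with h2 | h2
  · refine Or.inr (Or.inl ⟨⟨(j:ℕ) - 1, by omega⟩, Fin.ext ?_⟩)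
    rw [md_val]
    simp only [Fin.val_mk]
    omega
  · refine Or.inr (Or.inr (Fin.ext ?_))
    rw [lt3_val]
    omega

lemma Wb_col0 (m : ℕ) (ε : ℝ) (j : Fin (m+3)) : Wb m ε j 0 = Tf m ε j := by
  simp [Wb]

lemma Wb_colmid (m : ℕ) (ε : ℝ) (j : Fin (m+3)) (i : Fin (m+1)) :
    Wb m ε j (md m i) = Sf m j i := by
  have hval : ((md m i : Fin (m+3)) : ℕ) = (i:ℕ) + 1 := md_val m i
  have hi := i.isLt
  simp only [Wb, Matrix.of_apply, hval]
  rw [if_neg (by omega), dif_neg (by omega)]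
  congr 1

lemma Wb_collast (m : ℕ) (ε : ℝ) (j : Fin (m+3)) : Wb m ε j (lt3 m) = Lf m ε j := by
  have hval : ((lt3 m : Fin (m+3)) : ℕ) = m + 2 := lt3_val m
  simp only [Wb, Matrix.of_apply, hval]
  norm_num

/- values of the pieces on the three row classes -/
lemma Tf_zero (m : ℕ) (ε : ℝ) : Tf m ε 0 = 1 := by simp [Tf]
lemma Tf_mid (m : ℕ) (ε : ℝ) (i : Fin (m+1)) : Tf m ε (md m i) = Real.sqrt 2 := by
  have hi := i.isLt
  rw [Tf, md_val]
  rw [if_neg (by omega), if_neg (by omega)]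
lemma Tf_last (m : ℕ) (ε : ℝ) : Tf m ε (lt3 m) = sE m ε := by
  rw [Tf, lt3_val]
  rw [if_neg (by omega), if_pos rfl]
lemma Sf_zero (m : ℕ) (i : Fin (m+1)) : Sf m 0 i = 0 := by
  rw [Sf]
  rw [if_neg (by simp only [Fin.val_zero]; omega), if_neg (by simp only [Fin.val_zero]; omega)]
lemma Sf_mid (m : ℕ) (a i : Fin (m+1)) : Sf m (md m a) i = if a = i then 1 else 0 := by
  have ha := a.isLt
  rw [Sf, md_val]
  rw [if_neg (by omega)]
  by_cases h : a = i
  · rw [if_pos (by rw [h]), if_pos h]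
  · rw [if_neg (fun hh => h (Fin.ext (by omega))), if_neg h]
lemma Sf_last (m : ℕ) (i : Fin (m+1)) : Sf m (lt3 m) i = 1/2 := by
  rw [Sf, lt3_val, if_pos rfl]
lemma Lf_zero (m : ℕ) (ε : ℝ) : Lf m ε 0 = 0 := by simp [Lf]
lemma Lf_mid (m : ℕ) (ε : ℝ) (i : Fin (m+1)) : Lf m ε (md m i) = 0 := by
  have hi := i.isLt
  rw [Lf, md_val, if_neg (by omega)]
lemma Lf_last (m : ℕ) (ε : ℝ) : Lf m ε (lt3 m) = ε := by
  rw [Lf, lt3_val, if_pos rfl]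

lemma gram_Wb (m : ℕ) (ε : ℝ) (j k : Fin (m+3)) :
    (Wb m ε * mink (m+3) * (Wb m ε)ᵀ) j k =
      Tf m ε j * Tf m ε k - (∑ i : Fin (m+1), Sf m j i * Sf m k i) - Lf m ε j * Lf m ε k := by
  rw [gram_apply]
  rw [Fin.sum_univ_succ, Fin.sum_univ_castSucc]
  have e0 : (if ((0 : Fin (m+3)) : ℕ) = 0 then (1:ℝ) else -1) * Wb m ε j 0 * Wb m ε k 0
      = Tf m ε j * Tf m ε k := by
    rw [Wb_col0, Wb_col0]
    norm_num
  have emid : ∀ i : Fin (m+1),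
      (if (((i.castSucc).succ : Fin (m+3)) : ℕ) = 0 then (1:ℝ) else -1) *
        Wb m ε j ((i.castSucc).succ) * Wb m ε k ((i.castSucc).succ)
      = -(Sf m j i * Sf m k i) := by
    intro i
    rw [show ((i.castSucc).succ : Fin (m+3)) = md m i from rfl, Wb_colmid, Wb_colmid, md_val,
      if_neg (by omega)]
    ring
  have elast : (if (((Fin.last (m+1)).succ : Fin (m+3)) : ℕ) = 0 then (1:ℝ) else -1) *
        Wb m ε j ((Fin.last (m+1)).succ) * Wb m ε k ((Fin.last (m+1)).succ)
      = -(Lf m ε j * Lf m ε k) := by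
    rw [show ((Fin.last (m+1)).succ : Fin (m+3)) = lt3 m from rfl, Wb_collast, Wb_collast,
      lt3_val, if_neg (by omega)]
    ring
  rw [e0, elast, Finset.sum_congr rfl (fun i _ => emid i)]
  rw [Finset.sum_neg_distrib]
  ring


/- facts about `sE` -/
lemma sE_sq (m : ℕ) (ε : ℝ) : sE m ε * sE m ε = 1 + ((m:ℝ)+1)/4 + ε^2 :=
  Real.mul_self_sqrt (by positivity)

lemma sE_pos (m : ℕ) (ε : ℝ) : 0 < sE m ε := Real.sqrt_pos.mpr (by positivity)

lemma one_lt_sE (m : ℕ) (ε : ℝ) : 1 < sE m ε := by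
  rw [sE]
  refine (Real.lt_sqrt (by norm_num)).mpr ?_
  have : (0:ℝ) ≤ (m:ℝ) := Nat.cast_nonneg m
  nlinarith [sq_nonneg ε]

lemma one_lt_sqrt2 : (1:ℝ) < Real.sqrt 2 :=
  (Real.lt_sqrt (by norm_num)).mpr (by norm_num)

lemma sqrt2_sq : Real.sqrt 2 * Real.sqrt 2 = 2 := Real.mul_self_sqrt (by norm_num)

/- sums of products of spatial parts -/
lemma sum_Sf_zero_left (m : ℕ) (k : Fin (m+3)) :
    ∑ i : Fin (m+1), Sf m 0 i * Sf m k i = 0 :=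
  Finset.sum_eq_zero fun i _ => by rw [Sf_zero, zero_mul]

lemma sum_Sf_zero_right (m : ℕ) (j : Fin (m+3)) :
    ∑ i : Fin (m+1), Sf m j i * Sf m 0 i = 0 :=
  Finset.sum_eq_zero fun i _ => by rw [Sf_zero, mul_zero]

lemma sum_Sf_mid_mid (m : ℕ) (a b : Fin (m+1)) :
    ∑ i : Fin (m+1), Sf m (md m a) i * Sf m (md m b) i = if a = b then 1 else 0 := by
  have h1 : ∀ i : Fin (m+1), Sf m (md m a) i * Sf m (md m b) i
      = if a = i then (if b = i then (1:ℝ) else 0) else 0 := by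
    intro i
    rw [Sf_mid, Sf_mid]
    split_ifs <;> norm_num
  rw [Finset.sum_congr rfl fun i _ => h1 i, Finset.sum_ite_eq]
  simp only [Finset.mem_univ, if_true]
  rcases eq_or_ne a b with rfl | h
  · simp
  · rw [if_neg (fun hh => h hh.symm), if_neg h]

lemma sum_Sf_mid_last (m : ℕ) (a : Fin (m+1)) :
    ∑ i : Fin (m+1), Sf m (md m a) i * Sf m (lt3 m) i = 1/2 := by
  have h1 : ∀ i : Fin (m+1), Sf m (md m a) i * Sf m (lt3 m) i
      = if a = i then (1:ℝ)/2 else 0 := by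
    intro i
    rw [Sf_mid, Sf_last]
    split_ifs <;> norm_num
  rw [Finset.sum_congr rfl fun i _ => h1 i, Finset.sum_ite_eq]
  simp

lemma sum_Sf_last_mid (m : ℕ) (a : Fin (m+1)) :
    ∑ i : Fin (m+1), Sf m (lt3 m) i * Sf m (md m a) i = 1/2 := by
  rw [Finset.sum_congr rfl fun i _ => mul_comm _ _]
  exact sum_Sf_mid_last m a

lemma sum_Sf_last_last (m : ℕ) :
    ∑ i : Fin (m+1), Sf m (lt3 m) i * Sf m (lt3 m) i = ((m:ℝ)+1)/4 := by
  have h1 : ∀ i : Fin (m+1), Sf m (lt3 m) i * Sf m (lt3 m) i = (1:ℝ)/4 := fun i => by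
    rw [Sf_last]
    norm_num
  rw [Finset.sum_congr rfl fun i _ => h1 i]
  rw [Finset.sum_const, Finset.card_univ, Fintype.card_fin, nsmul_eq_mul]
  push_cast
  ring

/- the Gram matrix entries -/
lemma Gb_diag (m : ℕ) (ε : ℝ) (j : Fin (m+3)) :
    (Wb m ε * mink (m+3) * (Wb m ε)ᵀ) j j = 1 := by
  rw [gram_Wb]
  rcases fin3_cases m j with rfl | ⟨i, rfl⟩ | rfl
  · rw [Tf_zero, Lf_zero, sum_Sf_zero_left]
    ring
  · rw [Tf_mid, Lf_mid, sum_Sf_mid_mid, if_pos rfl, sqrt2_sq]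
    ring
  · rw [Tf_last, Lf_last, sum_Sf_last_last, sE_sq]
    ring

lemma Gb_offdiag (m : ℕ) (ε : ℝ) (j k : Fin (m+3)) (hjk : j ≠ k) :
    1 < (Wb m ε * mink (m+3) * (Wb m ε)ᵀ) j k := by
  have h32 : (3:ℝ)/2 < Real.sqrt 2 * sE m ε := by
    rw [sE, ← Real.sqrt_mul (by norm_num : (0:ℝ) ≤ 2)]
    refine (Real.lt_sqrt (by norm_num)).mpr ?_
    have : (0:ℝ) ≤ (m:ℝ) := Nat.cast_nonneg m
    nlinarith [sq_nonneg ε]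
  rw [gram_Wb]
  rcases fin3_cases m j with rfl | ⟨a, rfl⟩ | rfl <;>
    rcases fin3_cases m k with rfl | ⟨b, rfl⟩ | rfl
  · exact absurd rfl hjk
  · rw [Tf_zero, Lf_zero, sum_Sf_zero_left]
    have := one_lt_sqrt2
    rw [Tf_mid]
    nlinarith
  · rw [Tf_zero, Lf_zero, sum_Sf_zero_left, Tf_last]
    have := one_lt_sE m ε
    nlinarith
  · rw [Tf_zero, Lf_zero, sum_Sf_zero_right, Tf_mid]
    have := one_lt_sqrt2
    nlinarith
  · have hab : a ≠ b := fun h => hjk (by rw [h])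
    rw [Tf_mid, Tf_mid, Lf_mid, sum_Sf_mid_mid, if_neg hab, sqrt2_sq]
    norm_num
  · rw [Tf_mid, Tf_last, Lf_mid, sum_Sf_mid_last]
    nlinarith
  · rw [Tf_zero, Lf_zero, sum_Sf_zero_right, Tf_last]
    have := one_lt_sE m ε
    nlinarith
  · rw [Tf_last, Tf_mid, Lf_mid, sum_Sf_last_mid]
    nlinarith
  · exact absurd rfl hjk


/- column sums of `y ᵥ* Wb` -/
lemma vecMul_Wb_col0 (m : ℕ) (ε : ℝ) (y : Fin (m+3) → ℝ) :
    (y ᵥ* Wb m ε) 0 = y 0 + (∑ i : Fin (m+1), y (md m i)) * Real.sqrt 2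
      + y (lt3 m) * sE m ε := by
  show (∑ j, y j * Wb m ε j 0) = _
  rw [Fin.sum_univ_succ, Fin.sum_univ_castSucc]
  rw [Wb_col0, Tf_zero]
  have hmid : ∀ i : Fin (m+1),
      y ((i.castSucc).succ) * Wb m ε ((i.castSucc).succ) 0 = y (md m i) * Real.sqrt 2 := by
    intro i
    rw [show ((i.castSucc).succ : Fin (m+3)) = md m i from rfl, Wb_col0, Tf_mid]
  rw [Finset.sum_congr rfl fun i _ => hmid i]
  rw [show ((Fin.last (m+1)).succ : Fin (m+3)) = lt3 m from rfl, Wb_col0, Tf_last]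
  rw [← Finset.sum_mul]
  ring

lemma vecMul_Wb_colmid (m : ℕ) (ε : ℝ) (y : Fin (m+3) → ℝ) (t : Fin (m+1)) :
    (y ᵥ* Wb m ε) (md m t) = y (md m t) + y (lt3 m) * (1/2) := by
  show (∑ j, y j * Wb m ε j (md m t)) = _
  rw [Fin.sum_univ_succ, Fin.sum_univ_castSucc]
  rw [Wb_colmid, Sf_zero]
  have hmid : ∀ i : Fin (m+1),
      y ((i.castSucc).succ) * Wb m ε ((i.castSucc).succ) (md m t)
        = if i = t then y (md m i) else 0 := by
    intro i
    rw [show ((i.castSucc).succ : Fin (m+3)) = md m i from rfl, Wb_colmid, Sf_mid]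
    split_ifs <;> ring
  rw [Finset.sum_congr rfl fun i _ => hmid i, Finset.sum_ite_eq']
  rw [show ((Fin.last (m+1)).succ : Fin (m+3)) = lt3 m from rfl, Wb_colmid, Sf_last]
  simp

lemma vecMul_Wb_collast (m : ℕ) (ε : ℝ) (y : Fin (m+3) → ℝ) :
    (y ᵥ* Wb m ε) (lt3 m) = y (lt3 m) * ε := by
  show (∑ j, y j * Wb m ε j (lt3 m)) = _
  rw [Fin.sum_univ_succ, Fin.sum_univ_castSucc]
  rw [Wb_collast, Lf_zero]
  have hmid : ∀ i : Fin (m+1),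
      y ((i.castSucc).succ) * Wb m ε ((i.castSucc).succ) (lt3 m) = 0 := by
    intro i
    rw [show ((i.castSucc).succ : Fin (m+3)) = md m i from rfl, Wb_collast, Lf_mid, mul_zero]
  rw [Finset.sum_congr rfl fun i _ => hmid i]
  rw [show ((Fin.last (m+1)).succ : Fin (m+3)) = lt3 m from rfl, Wb_collast, Lf_last]
  simp

/-- full row independence for `ε ≠ 0` -/
lemma rows_indep_Wb (m : ℕ) (ε : ℝ) (hε : ε ≠ 0) (y : Fin (m+3) → ℝ)
    (h : y ᵥ* Wb m ε = 0) : y = 0 := by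
  have hlast : y (lt3 m) = 0 := by
    have h1 := congrFun h (lt3 m)
    rw [vecMul_Wb_collast] at h1
    simp only [Pi.zero_apply] at h1
    rcases mul_eq_zero.mp h1 with h2 | h2
    · exact h2
    · exact absurd h2 hε
  have hmid : ∀ t : Fin (m+1), y (md m t) = 0 := by
    intro t
    have h1 := congrFun h (md m t)
    rw [vecMul_Wb_colmid] at h1
    simp only [Pi.zero_apply] at h1
    rw [hlast] at h1
    linarith
  have h0 : y 0 = 0 := by
    have h1 := congrFun h (0 : Fin (m+3))
    rw [vecMul_Wb_col0] at h1
    simp only [Pi.zero_apply] at h1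
    rw [hlast, Finset.sum_congr rfl fun i _ => hmid i] at h1
    simpa using h1
  funext j
  rcases fin3_cases m j with rfl | ⟨i, rfl⟩ | rfl
  · exact h0
  · exact hmid i
  · exact hlast

lemma K_ne (m : ℕ) : Real.sqrt 2 * ((m:ℝ)+1) / 2 - sE m 0 ≠ 0 := by
  intro h
  have he : Real.sqrt 2 * ((m:ℝ)+1) / 2 = sE m 0 := by linarith
  have h2 : Real.sqrt 2 * Real.sqrt 2 = 2 := sqrt2_sq
  have h3 : sE m 0 * sE m 0 = 1 + ((m:ℝ)+1)/4 + 0^2 := sE_sq m 0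
  have h4 : (Real.sqrt 2 * ((m:ℝ)+1) / 2) * (Real.sqrt 2 * ((m:ℝ)+1) / 2)
      = sE m 0 * sE m 0 := by rw [he]
  have h5 : ((m:ℝ)+1)^2 / 2 = 1 + ((m:ℝ)+1)/4 := by
    rw [h3] at h4
    nlinarith [h4]
  rcases Nat.eq_zero_or_pos m with rfl | hm
  · norm_num at h5
  · have : (1:ℝ) ≤ (m:ℝ) := by exact_mod_cast hm
    nlinarith

/-- proper–subset row independence for `ε = 0`: any dependency that vanishes
somewhere vanishes everywhere. -/
lemma rows_indep_Wb0 (m : ℕ) (y : Fin (m+3) → ℝ) (h : y ᵥ* Wb m 0 = 0)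
    (k : Fin (m+3)) (hk : y k = 0) : y = 0 := by
  have hmid : ∀ t : Fin (m+1), y (md m t) = -(1/2) * y (lt3 m) := by
    intro t
    have h1 := congrFun h (md m t)
    rw [vecMul_Wb_colmid] at h1
    simp only [Pi.zero_apply] at h1
    linarith
  have h0 : y 0 = (Real.sqrt 2 * ((m:ℝ)+1) / 2 - sE m 0) * y (lt3 m) := by
    have h1 := congrFun h (0 : Fin (m+3))
    rw [vecMul_Wb_col0] at h1
    simp only [Pi.zero_apply] at h1
    rw [Finset.sum_congr rfl fun i _ => hmid i] at h1
    rw [Finset.sum_const, Finset.card_univ, Fintype.card_fin, nsmul_eq_mul] at h1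
    push_cast at h1
    nlinarith [h1]
  have hlast : y (lt3 m) = 0 := by
    rcases fin3_cases m k with rfl | ⟨i, rfl⟩ | rfl
    · rw [h0] at hk
      rcases mul_eq_zero.mp hk with h2 | h2
      · exact absurd h2 (K_ne m)
      · exact h2
    · rw [hmid i] at hk
      linarith
    · exact hk
  funext j
  rcases fin3_cases m j with rfl | ⟨i, rfl⟩ | rfl
  · rw [h0, hlast]
    simp
  · rw [hmid i, hlast]
    simp
  · exact hlast


/- the `(m+2)`-column matrix (last, zero, column removed) and the boundary matrix -/
def Vs (m : ℕ) : Matrix (Fin (m+3)) (Fin (m+2)) ℝ := (Wb m 0).submatrix id Fin.castSucc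

def CM (m : ℕ) : Matrix (Fin (m+3)) (Fin (m+3)) ℝ := Vs m * mink (m+2) * (Vs m)ᵀ

lemma lt3_eq_last (m : ℕ) : (lt3 m : Fin (m+3)) = Fin.last (m+2) := Fin.ext (by simp [lt3])

lemma Wb0_lastcol (m : ℕ) (j : Fin (m+3)) : Wb m 0 j (Fin.last (m+2)) = 0 := by
  rw [← lt3_eq_last, Wb_collast]
  simp [Lf]

lemma pad (m : ℕ) : CM m = Wb m 0 * mink (m+3) * (Wb m 0)ᵀ := by
  ext j k
  show (Vs m * mink (m+2) * (Vs m)ᵀ) j k = _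
  rw [gram_apply, gram_apply]
  conv_rhs => rw [Fin.sum_univ_castSucc]
  rw [Wb0_lastcol, mul_zero, zero_mul, add_zero]
  refine Finset.sum_congr rfl fun c _ => ?_
  rw [Fin.coe_castSucc]
  rfl

lemma vecMul_Vs_zero (m : ℕ) (y : Fin (m+3) → ℝ) (h : y ᵥ* Wb m 0 = 0) :
    y ᵥ* Vs m = 0 := by
  funext c
  have h1 : (y ᵥ* Vs m) c = (y ᵥ* Wb m 0) (c.castSucc) := rfl
  rw [h1, h]
  simp

lemma vecMul_Vs_zero' (m : ℕ) (y : Fin (m+3) → ℝ) (h : y ᵥ* Vs m = 0) :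
    y ᵥ* Wb m 0 = 0 := by
  funext c
  induction c using Fin.lastCases with
  | last =>
      rw [← lt3_eq_last, vecMul_Wb_collast]
      simp
  | cast c =>
      have h1 : (y ᵥ* Wb m 0) (c.castSucc) = (y ᵥ* Vs m) c := rfl
      rw [h1, h]
      simp

lemma det_CM (m : ℕ) : (CM m).det = 0 := by
  set K : ℝ := Real.sqrt 2 * ((m:ℝ)+1) / 2 - sE m 0 with hK
  set lam : Fin (m+3) → ℝ :=
    fun j => if (j:ℕ) = 0 then 2*K else if (j:ℕ) = m+2 then 2 else -1 with hlam
  have hlam0 : lam 0 = 2*K := by simp [hlam]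
  have hlammid : ∀ i : Fin (m+1), lam (md m i) = -1 := by
    intro i
    have hi := i.isLt
    rw [hlam]
    simp only [md_val]
    rw [if_neg (by omega), if_neg (by omega)]
  have hlamlast : lam (lt3 m) = 2 := by
    rw [hlam]
    simp only [lt3_val]
    rw [if_neg (by omega)]
    simp
  have hker : lam ᵥ* Wb m 0 = 0 := by
    funext c
    rcases fin3_cases m c with rfl | ⟨t, rfl⟩ | rfl
    · rw [vecMul_Wb_col0, hlam0, hlamlast]
      rw [Finset.sum_congr rfl fun i _ => hlammid i]
      rw [Finset.sum_const, Finset.card_univ, Fintype.card_fin, nsmul_eq_mul]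
      push_cast
      simp only [Pi.zero_apply]
      rw [hK]
      ring
    · rw [vecMul_Wb_colmid, hlammid, hlamlast]
      norm_num
    · rw [vecMul_Wb_collast]
      simp
  have hCv : CM m *ᵥ lam = 0 := by
    have h1 : (Vs m)ᵀ *ᵥ lam = 0 := by
      rw [Matrix.mulVec_transpose]
      exact vecMul_Vs_zero m lam hker
    show (Vs m * mink (m+2) * (Vs m)ᵀ) *ᵥ lam = 0
    rw [← Matrix.mulVec_mulVec, h1, Matrix.mulVec_zero]
  have hne : lam ≠ 0 := by
    intro h0
    have := congrFun h0 (lt3 m)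
    rw [hlamlast] at this
    norm_num at this
  exact Matrix.exists_mulVec_eq_zero_iff.mp ⟨lam, hne, hCv⟩


lemma pow_flip {c : ℕ} {x : ℝ} (hc : 1 ≤ c) (h : 0 < (-1:ℝ)^(c-1) * x) :
    (-1:ℝ)^c * x < 0 := by
  have h1 : ((-1:ℝ))^c = (-1:ℝ)^(c-1) * (-1) := by
    rw [← pow_succ, show (c-1)+1 = c by omega]
  rw [h1]
  nlinarith [h]

/-- all matrices `Wb m ε`, `ε ≠ 0`, give points of `𝒞` -/
lemma mem_lob (m : ℕ) (ε : ℝ) (hε : ε ≠ 0) :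
    (Wb m ε * mink (m+3) * (Wb m ε)ᵀ) ∈ lobachevskyGram (m+2) := by
  refine ⟨gram_transpose _, Gb_diag m ε, fun j k h => Gb_offdiag m ε j k h, ?_⟩
  intro I hI
  have hcard1 : 1 ≤ I.card := by omega
  rw [principalMinor_eq']
  set g : Fin I.card → Fin (m+3) := fun i => ((I.equivFin.symm i : Fin (m+3))) with hg
  have hginj : Function.Injective g :=
    fun a b hab => (Equiv.injective I.equivFin.symm) (Subtype.coe_injective hab)
  rw [gram_submatrix]
  refine pow_flip hcard1 (gram_det_sign hcard1 ((Wb m ε).submatrix g id) ?_ ?_)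
  · intro j
    rw [← gram_submatrix]
    rw [Matrix.submatrix_apply]
    exact Gb_diag m ε (g j)
  · exact extend_indep (Wb m ε) g hginj (fun y hy _ => rows_indep_Wb m ε hε y hy)

lemma CM_diag (m : ℕ) (j : Fin (m+3)) : CM m j j = 1 := by
  rw [pad]
  exact Gb_diag m 0 j

lemma CM_offdiag (m : ℕ) (j k : Fin (m+3)) (h : j ≠ k) : 1 < CM m j k := by
  rw [pad]
  exact Gb_offdiag m 0 j k h

lemma minor_CM (m : ℕ) (I : Finset (Fin (m+3))) (hI : 2 ≤ I.card) (hle : I.card ≤ m+2) :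
    (-1:ℝ)^I.card * principalMinor (m+2) I (CM m) < 0 := by
  have hcard1 : 1 ≤ I.card := by omega
  rw [principalMinor_eq']
  set g : Fin I.card → Fin (m+3) := fun i => ((I.equivFin.symm i : Fin (m+3))) with hg
  have hginj : Function.Injective g :=
    fun a b hab => (Equiv.injective I.equivFin.symm) (Subtype.coe_injective hab)
  have hCM : CM m = Vs m * mink (m+2) * (Vs m)ᵀ := rfl
  rw [hCM, gram_submatrix]
  refine pow_flip hcard1 (gram_det_sign hcard1 ((Vs m).submatrix g id) ?_ ?_)
  · intro j
    rw [← gram_submatrix, Matrix.submatrix_apply, ← hCM]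
    exact CM_diag m (g j)
  · refine extend_indep (Vs m) g hginj ?_
    intro y hy hsupp
    have hex : ∃ k, k ∉ I := by
      by_contra hno
      push_neg at hno
      have h := Finset.eq_univ_iff_forall.mpr hno
      rw [h, Finset.card_univ, Fintype.card_fin] at hle
      omega
    obtain ⟨k, hk⟩ := hex
    have hyk : y k = 0 := hsupp k (fun i he => hk (he ▸ (I.equivFin.symm i).2))
    exact rows_indep_Wb0 m y (vecMul_Vs_zero' m y hy) k hyk

lemma mixed_CM (m : ℕ) : mixedMinor (m+2) (CM m) ≠ 0 := by
  rw [mixedMinor]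
  have hCM : CM m = Vs m * mink (m+2) * (Vs m)ᵀ := rfl
  rw [hCM, gram_submatrix]
  rw [Matrix.det_mul, Matrix.det_mul, Matrix.det_transpose]
  have hQ : (mink (m+2)).det ≠ 0 := by
    rw [mink, Matrix.det_diagonal]
    refine Finset.prod_ne_zero_iff.mpr fun c _ => ?_
    split_ifs <;> norm_num
  set r : Fin (m+2) → Fin (m+3) :=
    fun i => if (i:ℕ) = 0 then (0 : Fin (m+3)) else i.succ with hr
  set cc : Fin (m+2) → Fin (m+3) := fun i => i.succ with hcc
  have hrval : ∀ i : Fin (m+2), ((r i : Fin (m+3)) : ℕ) = if (i:ℕ) = 0 then 0 else (i:ℕ)+1 := by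
    intro i
    have hri : r i = if (i:ℕ) = 0 then (0 : Fin (m+3)) else i.succ := rfl
    rw [hri]
    by_cases hi : (i:ℕ) = 0
    · rw [if_pos hi, if_pos hi]
      rfl
    · rw [if_neg hi, if_neg hi, Fin.val_succ]
  have hrinj : Function.Injective r := by
    intro a b hab
    have h1 : ((r a : Fin (m+3)) : ℕ) = ((r b : Fin (m+3)) : ℕ) := congrArg Fin.val hab
    rw [hrval a, hrval b] at h1
    refine Fin.ext ?_
    split_ifs at h1 <;> omega
  have hccinj : Function.Injective cc := fun a b hab => Fin.succ_injective _ hab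
  have hdr : ((Vs m).submatrix r id).det ≠ 0 := by
    intro hdet
    obtain ⟨v, hv0, hv⟩ := Matrix.exists_vecMul_eq_zero_iff.mpr hdet
    refine hv0 (extend_indep (Vs m) r hrinj ?_ v hv)
    intro y hy hsupp
    have hmiss : ∀ i, r i ≠ (⟨1, by omega⟩ : Fin (m+3)) := by
      intro i he
      have h1 := congrArg Fin.val he
      rw [hrval i] at h1
      simp only [Fin.val_mk] at h1
      split_ifs at h1 <;> omega
    exact rows_indep_Wb0 m y (vecMul_Vs_zero' m y hy) _ (hsupp _ hmiss)
  have hdc : ((Vs m).submatrix cc id).det ≠ 0 := by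
    intro hdet
    obtain ⟨v, hv0, hv⟩ := Matrix.exists_vecMul_eq_zero_iff.mpr hdet
    refine hv0 (extend_indep (Vs m) cc hccinj ?_ v hv)
    intro y hy hsupp
    have hmiss : ∀ i, cc i ≠ (0 : Fin (m+3)) := fun i => Fin.succ_ne_zero i
    exact rows_indep_Wb0 m y (vecMul_Vs_zero' m y hy) _ (hsupp _ hmiss)
  exact mul_ne_zero (mul_ne_zero hdr hQ) hdc


lemma principalMinor_univ (n : ℕ) (C : Matrix (Fin (n+1)) (Fin (n+1)) ℝ) :
    principalMinor n Finset.univ C = C.det := by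
  unfold principalMinor
  exact Matrix.det_submatrix_equiv_self
    (⟨fun i => (i : Fin (n+1)),
      fun j => (⟨j, Finset.mem_univ j⟩ : {x // x ∈ (Finset.univ : Finset (Fin (n+1)))}),
      fun _ => rfl, fun _ => rfl⟩ :
      {x // x ∈ (Finset.univ : Finset (Fin (n+1)))} ≃ Fin (n+1)) C

lemma Wb_cont (m : ℕ) : Continuous fun ε : ℝ => Wb m ε := by
  apply continuous_matrix
  intro j c
  show Continuous fun ε : ℝ => (Wb m ε) j c
  simp only [Wb, Tf, Lf, sE, Matrix.of_apply]
  split_ifs <;>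
    first
      | exact continuous_const
      | exact continuous_id
      | exact Real.continuous_sqrt.comp (by continuity)

lemma CM_mem_closure (m : ℕ) : CM m ∈ closure (lobachevskyGram (m+2)) := by
  have hcont : Continuous fun ε : ℝ => Wb m ε * mink (m+3) * (Wb m ε)ᵀ :=
    ((Wb_cont m).matrix_mul continuous_const).matrix_mul (Wb_cont m).matrix_transpose
  have h0 : Wb m 0 * mink (m+3) * (Wb m 0)ᵀ = CM m := (pad m).symm
  refine mem_closure_of_tendsto (f := fun ε : ℝ => Wb m ε * mink (m+3) * (Wb m ε)ᵀ)
    (b := nhdsWithin (0:ℝ) ({0}ᶜ : Set ℝ)) ?_ ?_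
  · have ht : Filter.Tendsto (fun ε : ℝ => Wb m ε * mink (m+3) * (Wb m ε)ᵀ)
        (nhdsWithin (0:ℝ) ({0}ᶜ : Set ℝ)) (nhds (Wb m 0 * mink (m+3) * (Wb m 0)ᵀ)) :=
      (hcont.tendsto 0).mono_left nhdsWithin_le_nhds
    rw [h0] at ht
    exact ht
  · filter_upwards [self_mem_nhdsWithin] with ε hε using mem_lob m ε (by simpa using hε)

lemma CM_not_mem (m : ℕ) : CM m ∉ lobachevskyGram (m+2) := by
  intro hmem
  obtain ⟨_, _, _, h4⟩ := hmem
  have hcard : (Finset.univ : Finset (Fin (m+3))).card = m+3 := by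
    rw [Finset.card_univ, Fintype.card_fin]
  have h4' := h4 Finset.univ (by rw [hcard]; omega)
  rw [principalMinor_univ, det_CM, mul_zero] at h4'
  exact lt_irrefl 0 h4'

end
end BPHG

/-- For `n ≥ 2` there exists a real symmetric matrix `C⁰` with
unit diagonal such that: (i) `det C⁰ = 0`; (ii) `c⁰_{jk} > 1` for `j ≠ k`;
(iii) `(-1)^{|I|} D_I(C⁰) < 0` for every `I` with `2 ≤ |I| ≤ n`; (iv) the mixed
minor `D_{{0,2,…,n},{1,2,…,n}}(C⁰)` is nonzero (so `C⁰` is a regular point of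
the hypersurface `{det = 0}`).  Moreover `C⁰` lies in the boundary of
`𝒞_{Λ^n}`: it belongs to the closure of `𝒞_{Λ^n}` but not to `𝒞_{Λ^n}`. -/
theorem boundary_point_hyperbolic_gram
    (n : ℕ) (hn : 2 ≤ n) :
    ∃ C : Matrix (Fin (n + 1)) (Fin (n + 1)) ℝ,
      C.IsSymm ∧ (∀ j, C j j = 1) ∧
      C.det = 0 ∧
      (∀ j k, j ≠ k → 1 < C j k) ∧
      (∀ I : Finset (Fin (n + 1)), 2 ≤ I.card → I.card ≤ n →
        (-1 : ℝ) ^ I.card * principalMinor n I C < 0) ∧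
      mixedMinor n C ≠ 0 ∧
      C ∈ closure (lobachevskyGram n) ∧ C ∉ lobachevskyGram n := by
  obtain ⟨m, rfl⟩ : ∃ m, n = m + 2 := ⟨n - 2, by omega⟩
  refine ⟨BPHG.CM m, ?_, BPHG.CM_diag m, BPHG.det_CM m,
    fun j k h => BPHG.CM_offdiag m j k h,
    fun I h2 hle => BPHG.minor_CM m I h2 hle,
    BPHG.mixed_CM m, BPHG.CM_mem_closure m, BPHG.CM_not_mem m⟩
  exact BPHG.gram_transpose (BPHG.Vs m)
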